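/- Let G be a finite group acting faithfully and transitively on a finite set Ω with point stabilizer G_ω, and let h ∈ G be such that the cyclic subgroup H = ⟨h⟩ has exactly two orbits on Ω, of lengths n₁ and n₂. Suppose K ∈ L(G_ω,G) is H-transitive (K·⟨h⟩ = G as sets) but not core-complementary. Then n₁ = n₂, and there exists a subgroup K' ∈ L(G_ω,G) with K' ≤ K and index [K : K'] = 2 such that K' is core-complementary and H-intransitive, and moreover every H-intransitive subgroup L ∈ L(G_ω,G) with L ≤ K satisfies L ≤ K'. -/

import Mathlib

open Pointwise

lemma mem_orbit_zpowers_iff' {G Ω : Type*} [Group G] [MulAction G Ω] {h : G} {x y : Ω} :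
    y ∈ MulAction.orbit (Subgroup.zpowers h) x ↔ ∃ t : ℤ, h ^ t • x = y := by
  rw [MulAction.mem_orbit_iff]
  constructor
  · rintro ⟨⟨g, hg⟩, rfl⟩
    obtain ⟨t, rfl⟩ := Subgroup.mem_zpowers_iff.mp hg
    exact ⟨t, rfl⟩
  · rintro ⟨t, rfl⟩
    exact ⟨⟨h ^ t, Subgroup.mem_zpowers_iff.mpr ⟨t, rfl⟩⟩, rfl⟩

/-- A subgroup `A` with `G_ω ≤ A ≤ G` is core-complementary if
`A = G_ω · core_G(A)` as subsets of `G`. -/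
def IsCoreComplementary {G Ω : Type*} [Group G] [MulAction G Ω] (ω : Ω)
    (A : Subgroup G) : Prop :=
  (A : Set G) = (MulAction.stabilizer G ω : Set G) * (A.normalCore : Set G)

/-- Let `G` act faithfully and transitively on a finite set `Ω` with
point stabilizer `G_ω`, and let `h ∈ G` be such that `H = ⟨h⟩` has exactly two orbits on
`Ω`, of lengths `n₁` and `n₂`. If `K ∈ L(G_ω, G)` is `H`-transitive (`K·⟨h⟩ = G` as sets)
but not core-complementary, then `n₁ = n₂` and there is a subgroup `K' ∈ L(G_ω, G)` with
`K' ≤ K` of index `[K : K'] = 2` which is core-complementary and `H`-intransitive, and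
every `H`-intransitive `L ∈ L(G_ω, G)` with `L ≤ K` satisfies `L ≤ K'`. -/
theorem H_transitive_not_core_complementary {G Ω : Type*} [Group G] [Fintype Ω]
    [MulAction G Ω] [FaithfulSMul G Ω] (htrans : MulAction.IsPretransitive G Ω)
    (ω : Ω) (h : G) (a b : Ω) (n₁ n₂ : ℕ)
    (hab : MulAction.orbit (Subgroup.zpowers h) a ≠ MulAction.orbit (Subgroup.zpowers h) b)
    (horb : ∀ x : Ω, x ∈ MulAction.orbit (Subgroup.zpowers h) a ∨
      x ∈ MulAction.orbit (Subgroup.zpowers h) b)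
    (hn₁ : Nat.card (MulAction.orbit (Subgroup.zpowers h) a) = n₁)
    (hn₂ : Nat.card (MulAction.orbit (Subgroup.zpowers h) b) = n₂)
    (K : Subgroup G) (hK : MulAction.stabilizer G ω ≤ K)
    (hHtrans : (K : Set G) * (Subgroup.zpowers h : Set G) = (Set.univ : Set G))
    (hncc : ¬ IsCoreComplementary ω K) :
    n₁ = n₂ ∧
    ∃ K' : Subgroup G, MulAction.stabilizer G ω ≤ K' ∧ K' ≤ K ∧
      K'.relIndex K = 2 ∧
      IsCoreComplementary ω K' ∧
      (K' : Set G) * (Subgroup.zpowers h : Set G) ≠ (Set.univ : Set G) ∧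
      (∀ L : Subgroup G, MulAction.stabilizer G ω ≤ L → L ≤ K →
        (L : Set G) * (Subgroup.zpowers h : Set G) ≠ (Set.univ : Set G) → L ≤ K') := by
  classical
  haveI : Finite G := Finite.of_injective (MulAction.toPerm : G → Equiv.Perm Ω) MulAction.toPerm_injective
  -- decomposition G = K⟨h⟩ and G = ⟨h⟩K
  have hdec : ∀ g : G, ∃ k : G, k ∈ K ∧ ∃ j : ℤ, g = k * h ^ j := by
    intro g
    have hmem : g ∈ (K : Set G) * (Subgroup.zpowers h : Set G) := by rw [hHtrans]; trivial
    obtain ⟨k, hk, z, hz, hkz⟩ := Set.mem_mul.mp hmem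
    obtain ⟨j, rfl⟩ := Subgroup.mem_zpowers_iff.mp hz
    exact ⟨k, hk, j, hkz.symm⟩
  have hdec' : ∀ g : G, ∃ j : ℤ, ∃ k : G, k ∈ K ∧ g = h ^ j * k := by
    intro g
    obtain ⟨k, hk, j, hj⟩ := hdec g⁻¹
    refine ⟨-j, k⁻¹, K.inv_mem hk, ?_⟩
    apply inv_injective
    rw [hj]; group
  -- ⟨h⟩ is transitive on G ⧸ K
  have h1 : ∀ g : G, ∃ t : ℤ, h ^ t • ((1 : G) : G ⧸ K) = (g : G ⧸ K) := by
    intro g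
    obtain ⟨j, k, hk, hj⟩ := hdec' g
    refine ⟨j, ?_⟩
    rw [MulAction.Quotient.smul_coe]
    refine (QuotientGroup.eq.mpr ?_).symm
    rw [hj, smul_eq_mul, mul_one]
    simpa [inv_mul_cancel_left] using hk
  have horbQ : ∀ q : G ⧸ K, MulAction.orbit (Subgroup.zpowers h) q = Set.univ := by
    intro q
    obtain ⟨g, rfl⟩ := QuotientGroup.mk_surjective q
    refine Set.eq_univ_iff_forall.mpr fun q' => ?_
    obtain ⟨g', rfl⟩ := QuotientGroup.mk_surjective q'
    obtain ⟨t, ht⟩ := h1 g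
    obtain ⟨s, hs⟩ := h1 g'
    refine mem_orbit_zpowers_iff'.mpr ⟨s - t, ?_⟩
    rw [← ht, ← hs, smul_smul, ← zpow_add, sub_add_cancel]
  have hcard : ∀ q : G ⧸ K, Function.minimalPeriod (h • ·) q
      = Nat.card (MulAction.orbit (Subgroup.zpowers h) q) := by
    intro q
    letI : Fintype (MulAction.orbit (Subgroup.zpowers h) q) := Fintype.ofFinite _
    rw [Nat.card_eq_fintype_card]
    convert @MulAction.minimalPeriod_eq_card _ _ _ h _ q (Fintype.ofFinite _)
    exact MulAction.ext rfl
  have hμ : ∀ g : G, Function.minimalPeriod (h • ·) ((g : G ⧸ K))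
      = Function.minimalPeriod (h • ·) ((1 : G) : G ⧸ K) := by
    intro g; rw [hcard, hcard, horbQ, horbQ]
  set m : ℕ := Function.minimalPeriod (h • ·) ((1 : G) : G ⧸ K) with hm
  have hm0 : m ≠ 0 := by
    have : NeZero (Function.minimalPeriod (h • ·) ((1 : G) : G ⧸ K)) :=
      MulAction.minimalPeriod_pos h (((1 : G)) : G ⧸ K)
    exact this.out
  have hfix : ∀ (g : G) (t : ℤ), g⁻¹ * h ^ t * g ∈ K ↔ ((m : ℤ) ∣ t) := by
    intro g t
    have h2 : h ^ (-t) • ((g : G ⧸ K)) = (g : G ⧸ K) ↔ ((m : ℤ) ∣ -t) := by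
      rw [← hμ g]
      exact MulAction.zpow_smul_eq_iff_minimalPeriod_dvd
    rw [MulAction.Quotient.smul_coe, smul_eq_mul, QuotientGroup.eq, dvd_neg] at h2
    rw [← h2]
    constructor
    · intro hmem; convert hmem using 1; group
    · intro hmem; convert hmem using 1; group
  set N : Subgroup G := K.normalCore with hNdef
  set K' : Subgroup G := N ⊔ MulAction.stabilizer G ω with hK'def
  have hNK : N ≤ K := K.normalCore_le
  have hK'K : K' ≤ K := sup_le hNK hK
  have hsK' : MulAction.stabilizer G ω ≤ K' := le_sup_right
  have hNK' : N ≤ K' := le_sup_left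
  have hpoint : ∀ (A : Subgroup G), MulAction.stabilizer G ω ≤ A →
      ∀ u g : G, u ∈ A → g • ω = u • ω → g ∈ A := by
    intro A hA u g hu he
    have hst : u⁻¹ * g ∈ MulAction.stabilizer G ω := by
      rw [MulAction.mem_stabilizer_iff, mul_smul, he, ← mul_smul, inv_mul_cancel, one_smul]
    have := A.mul_mem hu (hA hst)
    simpa [mul_inv_cancel_left] using this
  have hNm : ∀ t : ℤ, (m : ℤ) ∣ t → h ^ t ∈ N := by
    intro t ht
    have : ∀ g : G, g * h ^ t * g⁻¹ ∈ K := by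
      intro g
      have := (hfix g⁻¹ t).mpr ht
      rwa [inv_inv] at this
    exact this
  have hblk : ∀ (t : ℤ) (k : G), k ∈ K → (h ^ t * k ∈ K ↔ (m : ℤ) ∣ t) := by
    intro t k hk
    rw [← hfix k t]
    constructor
    · intro h2
      have := K.mul_mem (K.inv_mem hk) h2
      rwa [← mul_assoc] at this
    · intro h2
      have := K.mul_mem hk h2
      have h3 : k * (k⁻¹ * h ^ t * k) = h ^ t * k := by group
      rwa [h3] at this
  have hK'mem : ∀ g : G, g ∈ K' ↔ ∃ n, n ∈ N ∧ g • ω = n • ω := by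
    intro g; constructor
    · intro hg
      have : g ∈ ((N : Set G) * (MulAction.stabilizer G ω : Set G)) := by
        rw [← Subgroup.normal_mul]; exact hg
      obtain ⟨n, hn, s, hs, rfl⟩ := Set.mem_mul.mp this
      exact ⟨n, hn, by rw [mul_smul, MulAction.mem_stabilizer_iff.mp hs]⟩
    · rintro ⟨n, hn, he⟩; exact hpoint K' hsK' n g (hNK' hn) he
  -- the element of K outside K'
  obtain ⟨k₀, hk₀K, hk₀K'⟩ : ∃ k₀, k₀ ∈ K ∧ k₀ ∉ K' := by
    by_contra hcon
    push_neg at hcon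
    apply hncc
    have hKK' : (K : Set G) = (K' : Set G) := by
      apply le_antisymm
      · exact fun x hx => hcon x hx
      · exact hK'K
    show (K : Set G) = _
    rw [hKK', hK'def, sup_comm, Subgroup.mul_normal]
  -- backward direction: points of B in the orbit of ω give membership in K'
  have hK'bwd : ∀ k : G, k ∈ K → (∃ t : ℤ, h ^ t • ω = k • ω) → k ∈ K' := by
    rintro k hk ⟨t, ht⟩
    have hhtK : h ^ t ∈ K := hpoint K hK k (h ^ t) hk ht
    have hdvd : (m : ℤ) ∣ t := by
      have := (hblk t 1 K.one_mem).mp (by rwa [mul_one])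
      exact this
    exact (hK'mem k).mpr ⟨h ^ t, hNm t hdvd, ht.symm⟩
  have hx_notO : ¬ ∃ t : ℤ, h ^ t • ω = k₀ • ω := by
    rintro ⟨t, ht⟩
    exact hk₀K' (hK'bwd k₀ hk₀K ⟨t, ht⟩)
  -- the two orbits are those of ω and k₀ • ω
  have hdi : (MulAction.orbit (Subgroup.zpowers h) a = MulAction.orbit (Subgroup.zpowers h) ω ∧
        MulAction.orbit (Subgroup.zpowers h) b = MulAction.orbit (Subgroup.zpowers h) (k₀ • ω)) ∨
      (MulAction.orbit (Subgroup.zpowers h) b = MulAction.orbit (Subgroup.zpowers h) ω ∧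
        MulAction.orbit (Subgroup.zpowers h) a = MulAction.orbit (Subgroup.zpowers h) (k₀ • ω)) := by
    rcases horb ω with h₁ | h₁ <;> rcases horb (k₀ • ω) with h₂ | h₂
    · exfalso
      apply hx_notO
      apply mem_orbit_zpowers_iff'.mp
      rw [MulAction.orbit_eq_iff.mpr h₁]
      exact h₂
    · exact Or.inl ⟨(MulAction.orbit_eq_iff.mpr h₁).symm, (MulAction.orbit_eq_iff.mpr h₂).symm⟩
    · exact Or.inr ⟨(MulAction.orbit_eq_iff.mpr h₁).symm, (MulAction.orbit_eq_iff.mpr h₂).symm⟩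
    · exfalso
      apply hx_notO
      apply mem_orbit_zpowers_iff'.mp
      rw [MulAction.orbit_eq_iff.mpr h₁]
      exact h₂
  have horb2 : ∀ z : Ω, (∃ t : ℤ, h ^ t • ω = z) ∨ (∃ t : ℤ, h ^ t • (k₀ • ω) = z) := by
    intro z
    rcases hdi with ⟨ha1, hb1⟩ | ⟨hb1, ha1⟩ <;> rcases horb z with hz | hz
    · exact Or.inl (mem_orbit_zpowers_iff'.mp (ha1 ▸ hz))
    · exact Or.inr (mem_orbit_zpowers_iff'.mp (hb1 ▸ hz))
    · exact Or.inr (mem_orbit_zpowers_iff'.mp (ha1 ▸ hz))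
    · exact Or.inl (mem_orbit_zpowers_iff'.mp (hb1 ▸ hz))
  have hNx : ∀ (t : ℤ) (k : G), k ∈ K → h ^ t • (k₀ • ω) = k • ω → (m : ℤ) ∣ t := by
    intro t k hk he
    have he' : (h ^ t * k₀) • ω = k • ω := by rw [mul_smul]; exact he
    have : h ^ t * k₀ ∈ K := hpoint K hK k (h ^ t * k₀) hk he'
    exact (hblk t k₀ hk₀K).mp this
  have hNorb : ∀ n : G, n ∈ N → ∃ t : ℤ, (m : ℤ) ∣ t ∧ h ^ t • ω = n • ω := by
    intro n hn
    rcases horb2 (n • ω) with ⟨t, ht⟩ | ⟨t, ht⟩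
    · refine ⟨t, ?_, ht⟩
      have hhtK : h ^ t ∈ K := hpoint K hK n (h ^ t) (hNK hn) ht
      exact (hblk t 1 K.one_mem).mp (by rwa [mul_one])
    · exfalso
      have hdvd : (m : ℤ) ∣ t := hNx t n (hNK hn) ht
      apply hk₀K'
      refine (hK'mem k₀).mpr ⟨h ^ (-t) * n, N.mul_mem (hNm _ (dvd_neg.mpr hdvd)) hn, ?_⟩
      rw [mul_smul, ← ht, ← mul_smul, ← zpow_add, neg_add_cancel, zpow_zero, one_smul]
  have hK'iff : ∀ k : G, k ∈ K → (k ∈ K' ↔ ∃ t : ℤ, h ^ t • ω = k • ω) := by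
    intro k hk
    refine ⟨fun hkK' => ?_, hK'bwd k hk⟩
    obtain ⟨n, hn, he⟩ := (hK'mem k).mp hkK'
    obtain ⟨t, _, ht⟩ := hNorb n hn
    exact ⟨t, by rw [ht, he]⟩
  have hside : ∀ k : G, k ∈ K → k ∉ K' → ∃ t : ℤ, (m : ℤ) ∣ t ∧ h ^ t • (k₀ • ω) = k • ω := by
    intro k hk hk'
    rcases horb2 (k • ω) with ⟨t, ht⟩ | ⟨t, ht⟩
    · exact absurd (hK'bwd k hk ⟨t, ht⟩) hk'
    · exact ⟨t, hNx t k hk ht, ht⟩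
  have hM7 : ∀ k₁ k₂ : G, k₁ ∈ K → k₂ ∈ K → k₁ ∉ K' → k₂ ∉ K' → k₁⁻¹ * k₂ ∈ K' := by
    intro k₁ k₂ hk₁ hk₂ hk₁' hk₂'
    obtain ⟨t₁, hd₁, he₁⟩ := hside k₁ hk₁ hk₁'
    obtain ⟨t₂, hd₂, he₂⟩ := hside k₂ hk₂ hk₂'
    have hN : k₁⁻¹ * h ^ (t₂ - t₁) * k₁ ∈ N := by
      have := (Subgroup.normalCore_normal K).conj_mem _ (hNm (t₂ - t₁) (dvd_sub hd₂ hd₁)) k₁⁻¹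
      simpa using this
    refine (hK'mem _).mpr ⟨k₁⁻¹ * h ^ (t₂ - t₁) * k₁, hN, ?_⟩
    have hx : k₀ • ω = h ^ (-t₁) • (k₁ • ω) := by rw [← he₁, ← mul_smul, ← zpow_add]; simp
    have h2 : k₂ • ω = h ^ (t₂ - t₁) • (k₁ • ω) := by
      rw [← he₂, hx, ← mul_smul, ← zpow_add, sub_eq_add_neg]
    rw [mul_smul, h2]
    rw [mul_assoc, mul_smul, mul_smul]

  -- minimal periods on Ω
  have hcardΩ : ∀ z : Ω, Nat.card (MulAction.orbit (Subgroup.zpowers h) z)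
      = Function.minimalPeriod (h • ·) z := by
    intro z
    letI : Fintype (MulAction.orbit (Subgroup.zpowers h) z) := Fintype.ofFinite _
    rw [Nat.card_eq_fintype_card]
    exact (MulAction.minimalPeriod_eq_card (a := h) (b := z)).symm
  set p₁ : ℕ := Function.minimalPeriod (h • ·) ω with hp₁
  set p₂ : ℕ := Function.minimalPeriod (h • ·) (k₀ • ω) with hp₂
  have hmp₁ : m ∣ p₁ := by
    have hfixω : h ^ (p₁ : ℤ) • ω = ω := by
      rw [zpow_natCast]
      exact MulAction.pow_smul_eq_iff_minimalPeriod_dvd.mpr dvd_rfl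
    have hK1 : h ^ (p₁ : ℤ) ∈ K := hK (MulAction.mem_stabilizer_iff.mpr hfixω)
    have h2 := (hblk (p₁ : ℤ) 1 K.one_mem).mp (by rwa [mul_one])
    exact_mod_cast h2
  have hmp₂ : m ∣ p₂ := by
    have hfixx : h ^ (p₂ : ℤ) • (k₀ • ω) = (k₀ • ω) := by
      rw [zpow_natCast]
      exact MulAction.pow_smul_eq_iff_minimalPeriod_dvd.mpr dvd_rfl
    have hst : k₀⁻¹ * h ^ (p₂ : ℤ) * k₀ ∈ MulAction.stabilizer G ω := by
      rw [MulAction.mem_stabilizer_iff, mul_smul, mul_smul, hfixx, ← mul_smul,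
        inv_mul_cancel, one_smul]
    have h2 := (hfix k₀ (p₂ : ℤ)).mp (hK hst)
    exact_mod_cast h2
  have hzc : ∀ t : ℤ, (h ^ m) ^ t = h ^ ((m : ℤ) * t) := by
    intro t
    rw [zpow_mul, zpow_natCast]
  have e₁ : MulAction.orbit (Subgroup.zpowers (h ^ m)) ω = MulAction.orbit N ω := by
    apply Set.Subset.antisymm
    · intro z hz
      obtain ⟨t, ht⟩ := mem_orbit_zpowers_iff'.mp hz
      refine MulAction.mem_orbit_iff.mpr ⟨⟨h ^ ((m : ℤ) * t), hNm _ ⟨t, rfl⟩⟩, ?_⟩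
      rw [← ht, hzc]
      rfl
    · intro z hz
      obtain ⟨⟨n, hn⟩, rfl⟩ := MulAction.mem_orbit_iff.mp hz
      obtain ⟨t, hdvd, ht⟩ := hNorb n hn
      obtain ⟨s, rfl⟩ := hdvd
      refine mem_orbit_zpowers_iff'.mpr ⟨s, ?_⟩
      rw [hzc, ht]
      rfl
  have e₂ : MulAction.orbit (Subgroup.zpowers (h ^ m)) (k₀ • ω)
      = MulAction.orbit N (k₀ • ω) := by
    apply Set.Subset.antisymm
    · intro z hz
      obtain ⟨t, ht⟩ := mem_orbit_zpowers_iff'.mp hz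
      refine MulAction.mem_orbit_iff.mpr ⟨⟨h ^ ((m : ℤ) * t), hNm _ ⟨t, rfl⟩⟩, ?_⟩
      rw [← ht, hzc]
      rfl
    · intro z hz
      obtain ⟨⟨n, hn⟩, rfl⟩ := MulAction.mem_orbit_iff.mp hz
      have hnk₀K : n * k₀ ∈ K := K.mul_mem (hNK hn) hk₀K
      have hnk₀K' : n * k₀ ∉ K' := by
        intro hcon
        apply hk₀K'
        have := K'.mul_mem (K'.inv_mem (hNK' hn)) hcon
        simpa [inv_mul_cancel_left] using this
      obtain ⟨t, hdvd, ht⟩ := hside (n * k₀) hnk₀K hnk₀K'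
      obtain ⟨s, rfl⟩ := hdvd
      refine mem_orbit_zpowers_iff'.mpr ⟨s, ?_⟩
      rw [hzc, ht, mul_smul]
      rfl
  have e₃ : MulAction.orbit N (k₀ • ω) = k₀ • (MulAction.orbit N ω) := by
    ext z
    rw [Set.mem_smul_set_iff_inv_smul_mem]
    constructor
    · intro hz
      obtain ⟨⟨n, hn⟩, rfl⟩ := MulAction.mem_orbit_iff.mp hz
      refine MulAction.mem_orbit_iff.mpr
        ⟨⟨k₀⁻¹ * n * k₀, by simpa using (Subgroup.normalCore_normal K).conj_mem n hn k₀⁻¹⟩, ?_⟩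
      show (k₀⁻¹ * n * k₀) • ω = k₀⁻¹ • (⟨n, hn⟩ : N) • (k₀ • ω)
      show (k₀⁻¹ * n * k₀) • ω = k₀⁻¹ • n • k₀ • ω
      rw [mul_smul, mul_smul]
    · intro hz
      obtain ⟨⟨n, hn⟩, he⟩ := MulAction.mem_orbit_iff.mp hz
      refine MulAction.mem_orbit_iff.mpr
        ⟨⟨k₀ * n * k₀⁻¹, (Subgroup.normalCore_normal K).conj_mem n hn k₀⟩, ?_⟩
      show (k₀ * n * k₀⁻¹) • (k₀ • ω) = z
      have he' : n • ω = k₀⁻¹ • z := he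
      rw [mul_smul, mul_smul, inv_smul_smul, he', smul_inv_smul]
  have hc₁ : Nat.card (MulAction.orbit (Subgroup.zpowers (h ^ m)) ω) = p₁ / m := by
    letI : Fintype (MulAction.orbit (Subgroup.zpowers (h ^ m)) ω) := Fintype.ofFinite _
    rw [Nat.card_eq_fintype_card, ← MulAction.minimalPeriod_eq_card (a := h ^ m) (b := ω)]
    have hiter : ((h ^ m) • · : Ω → Ω) = (h • ·)^[m] := (smul_iterate h m).symm
    rw [hiter, Function.minimalPeriod_iterate_eq_div_gcd hm0, Nat.gcd_eq_right hmp₁]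
  have hc₂ : Nat.card (MulAction.orbit (Subgroup.zpowers (h ^ m)) (k₀ • ω)) = p₂ / m := by
    letI : Fintype (MulAction.orbit (Subgroup.zpowers (h ^ m)) (k₀ • ω)) := Fintype.ofFinite _
    rw [Nat.card_eq_fintype_card, ← MulAction.minimalPeriod_eq_card (a := h ^ m) (b := k₀ • ω)]
    have hiter : ((h ^ m) • · : Ω → Ω) = (h • ·)^[m] := (smul_iterate h m).symm
    rw [hiter, Function.minimalPeriod_iterate_eq_div_gcd hm0, Nat.gcd_eq_right hmp₂]
  have hcc : Nat.card (MulAction.orbit N (k₀ • ω)) = Nat.card (MulAction.orbit N ω) := by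
    rw [e₃, Nat.card_coe_set_eq, Nat.card_coe_set_eq, Set.ncard_smul_set]
  have hp12 : p₁ = p₂ := by
    have hdiv : p₁ / m = p₂ / m := by
      rw [← hc₁, ← hc₂, e₁, e₂, hcc]
    calc p₁ = m * (p₁ / m) := (Nat.mul_div_cancel' hmp₁).symm
      _ = m * (p₂ / m) := by rw [hdiv]
      _ = p₂ := Nat.mul_div_cancel' hmp₂
  have hn12 : n₁ = n₂ := by
    rcases hdi with ⟨ha1, hb1⟩ | ⟨hb1, ha1⟩
    · rw [← hn₁, ← hn₂, ha1, hb1, hcardΩ, hcardΩ]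
      exact hp12
    · rw [← hn₁, ← hn₂, ha1, hb1, hcardΩ, hcardΩ]
      exact hp12.symm
  refine ⟨hn12, K', hsK', hK'K, ?_, ?_, ?_, ?_⟩
  · -- relindex
    have hrel : (K'.subgroupOf K).index = 2 := by
      rw [Subgroup.index_eq_two_iff]
      refine ⟨⟨k₀, hk₀K⟩, fun c => ?_⟩
      by_cases hc : (c : G) ∈ K'
      · refine Or.inr ⟨Subgroup.mem_subgroupOf.mpr hc, fun hcon => ?_⟩
        have h2 : (c : G) * k₀ ∈ K' := Subgroup.mem_subgroupOf.mp hcon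
        apply hk₀K'
        have := K'.mul_mem (K'.inv_mem hc) h2
        simpa [inv_mul_cancel_left] using this
      · refine Or.inl ⟨?_, fun hcon => hc (Subgroup.mem_subgroupOf.mp hcon)⟩
        apply Subgroup.mem_subgroupOf.mpr
        have hcinv : ((c : G))⁻¹ ∉ K' := fun hh => hc (by simpa using K'.inv_mem hh)
        have := hM7 ((c : G))⁻¹ k₀ (K.inv_mem c.2) hk₀K hcinv hk₀K'
        rwa [inv_inv] at this
    exact hrel
  · -- core-complementary
    have hNcore : N ≤ K'.normalCore := Subgroup.normal_le_normalCore.mpr hNK'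
    show (K' : Set G) = _
    apply Set.Subset.antisymm
    · have hset : (K' : Set G) = (MulAction.stabilizer G ω : Set G) * (N : Set G) := by
        rw [hK'def, sup_comm, Subgroup.mul_normal]
      rw [hset]
      exact Set.mul_subset_mul_left (fun x hx => hNcore hx)
    · intro x hx
      obtain ⟨s, hs, n, hn, rfl⟩ := Set.mem_mul.mp hx
      exact K'.mul_mem (hsK' hs) (K'.normalCore_le hn)
  · -- H-intransitive
    intro heq
    have hmem : k₀⁻¹ ∈ (K' : Set G) * (Subgroup.zpowers h : Set G) := by rw [heq]; trivial
    obtain ⟨k', hk', z, hz, hzz⟩ := Set.mem_mul.mp hmem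
    obtain ⟨j, rfl⟩ := Subgroup.mem_zpowers_iff.mp hz
    have hk₀eq : k₀ = h ^ (-j) * k'⁻¹ := by
      apply inv_injective
      rw [← hzz]; group
    obtain ⟨t, ht⟩ := (hK'iff k'⁻¹ (hK'K (K'.inv_mem hk'))).mp (K'.inv_mem hk')
    apply hx_notO
    refine ⟨-j + t, ?_⟩
    rw [hk₀eq, zpow_add, mul_smul, ht, ← mul_smul]
  · -- maximality
    intro L hL hLK hLint
    by_contra hnot
    obtain ⟨l₀, hl₀L, hl₀K'⟩ := SetLike.not_le_iff_exists.mp hnot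
    apply hLint
    refine Set.eq_univ_iff_forall.mpr fun g => ?_
    obtain ⟨kk, hkk, j, hj⟩ := hdec g
    have hk₁K : kk⁻¹ ∈ K := K.inv_mem hkk
    have hginv : g⁻¹ = h ^ (-j) * kk⁻¹ := by rw [hj]; group
    by_cases hcase : kk⁻¹ ∈ K'
    · obtain ⟨t, ht⟩ := (hK'iff kk⁻¹ hk₁K).mp hcase
      have he : g⁻¹ • ω = h ^ (-j + t) • ω := by
        rw [hginv, mul_smul, ← ht, ← mul_smul, ← zpow_add]
      have hu : h ^ (-(-j + t)) * g⁻¹ ∈ MulAction.stabilizer G ω := by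
        rw [MulAction.mem_stabilizer_iff, mul_smul, he, ← mul_smul, ← zpow_add,
          neg_add_cancel, zpow_zero, one_smul]
      exact Set.mem_mul.mpr ⟨(h ^ (-(-j + t)) * g⁻¹)⁻¹, L.inv_mem (hL hu), h ^ (-(-j + t)),
        Subgroup.mem_zpowers_iff.mpr ⟨-(-j + t), rfl⟩, by group⟩
    · have hkinv : (kk⁻¹)⁻¹ ∉ K' := fun hh => hcase (by simpa using K'.inv_mem hh)
      have hprod : kk⁻¹ * l₀ ∈ K' := by
        have := hM7 (kk⁻¹)⁻¹ l₀ (K.inv_mem hk₁K) (hLK hl₀L) hkinv hl₀K'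
        rwa [inv_inv] at this
      obtain ⟨t, ht⟩ := (hK'iff (kk⁻¹ * l₀) (hK'K hprod)).mp hprod
      have he : g⁻¹ • (l₀ • ω) = h ^ (-j + t) • ω := by
        rw [hginv, mul_smul, ← mul_smul kk⁻¹, ← ht, ← mul_smul, ← zpow_add]
      have hu : h ^ (-(-j + t)) * g⁻¹ * l₀ ∈ MulAction.stabilizer G ω := by
        rw [MulAction.mem_stabilizer_iff, mul_smul, mul_smul, he, ← mul_smul, ← zpow_add,
          neg_add_cancel, zpow_zero, one_smul]
      exact Set.mem_mul.mpr ⟨l₀ * (h ^ (-(-j + t)) * g⁻¹ * l₀)⁻¹,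
        L.mul_mem hl₀L (L.inv_mem (hL hu)), h ^ (-(-j + t)),
        Subgroup.mem_zpowers_iff.mpr ⟨-(-j + t), rfl⟩, by group⟩
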